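/- Let β ∈ (1,2) and let a = (a_n) be the quasi-greedy expansion of 1 in base β. A sequence ε ∈ {0,1}^ℕ is the unique β-representation of some x ∈ ((2-β)/(β-1), 1) if and only if for all n ≥ 0 the shifted sequence σ^n ε is lexicographically strictly between the complemented sequence ā (where ā_k = 1 - a_k) and a itself. -/

import Mathlib

/-- Strict lexicographic order on digit sequences. -/
def LexLt (x y : ℕ → ℕ) : Prop := ∃ n, (∀ k < n, x k = y k) ∧ x n < y n

/-- Non-strict lexicographic order on digit sequences. -/
def LexLe (x y : ℕ → ℕ) : Prop := LexLt x y ∨ x = y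

/-- `a` is the quasi-greedy expansion of `1` in base `β ∈ (1,2)`: the lexicographically
largest binary sequence summing to `1` that does not end in `0^∞`. -/
structure IsQuasiGreedyOne (β : ℝ) (a : ℕ → ℕ) : Prop where
  digits : ∀ n, a n ≤ 1
  sum_one : (∑' n : ℕ, (a n : ℝ) / β ^ (n + 1)) = 1
  not_fin : ∀ N, ∃ n ≥ N, a n ≠ 0
  maximal : ∀ b : ℕ → ℕ, (∀ n, b n ≤ 1) → (∑' n : ℕ, (b n : ℝ) / β ^ (n + 1)) = 1 →
    (∀ N, ∃ n ≥ N, b n ≠ 0) → LexLe b a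

namespace URep

noncomputable def pib (β : ℝ) (ε : ℕ → ℕ) : ℝ := ∑' n, (ε n : ℝ) / β ^ (n + 1)

variable {β : ℝ} (hβ1 : 1 < β)

section basic
include hβ1

lemma bpos : (0:ℝ) < β := lt_trans one_pos hβ1

lemma term_nonneg (ε : ℕ → ℕ) (n : ℕ) : 0 ≤ (ε n : ℝ) / β ^ (n + 1) := by
  have h0 : (0:ℝ) < β := bpos hβ1
  positivity

lemma term_le {ε : ℕ → ℕ} (hε : ∀ n, ε n ≤ 1) (n : ℕ) :
    (ε n : ℝ) / β ^ (n + 1) ≤ (β⁻¹) ^ (n + 1) := by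
  have h0 : (0:ℝ) < β ^ (n+1) := pow_pos (bpos hβ1) (n+1)
  rw [inv_pow, div_eq_mul_inv]
  have h1 : (ε n : ℝ) ≤ 1 := by exact_mod_cast hε n
  have h2 : (0:ℝ) ≤ (β ^ (n+1))⁻¹ := by positivity
  nlinarith

lemma summable_geom_shift : Summable (fun n : ℕ => (β⁻¹) ^ (n + 1)) :=
  (summable_geometric_of_lt_one (by positivity)
      (inv_lt_one_of_one_lt₀ hβ1)).comp_injective (add_left_injective 1)

lemma summable_pib {ε : ℕ → ℕ} (hε : ∀ n, ε n ≤ 1) :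
    Summable (fun n => (ε n : ℝ) / β ^ (n + 1)) :=
  Summable.of_nonneg_of_le (term_nonneg hβ1 ε) (term_le hβ1 hε) (summable_geom_shift hβ1)

lemma pib_ones : pib β (fun _ => 1) = 1 / (β - 1) := by
  have h0 : (0:ℝ) < β := bpos hβ1
  have : pib β (fun _ => 1) = ∑' n : ℕ, (β⁻¹) ^ n * β⁻¹ := by
    unfold pib
    congr 1; funext n
    rw [pow_succ, Nat.cast_one, one_div, mul_inv, inv_pow]
  rw [this, tsum_mul_right, tsum_geometric_of_lt_one (by positivity)
    (inv_lt_one_of_one_lt₀ hβ1)]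
  rw [show (1 - β⁻¹) = (β-1)/β from by field_simp, one_div, inv_div]
  rw [div_mul_eq_mul_div, mul_inv_cancel₀ (by linarith : β ≠ 0), one_div]

lemma pib_nonneg (ε : ℕ → ℕ) : 0 ≤ pib β ε :=
  tsum_nonneg (term_nonneg hβ1 ε)

lemma pib_le_ones {ε : ℕ → ℕ} (hε : ∀ n, ε n ≤ 1) : pib β ε ≤ 1 / (β - 1) := by
  rw [← pib_ones hβ1]
  apply Summable.tsum_le_tsum _ (summable_pib hβ1 hε) (summable_pib hβ1 (fun _ => le_refl 1))
  intro n
  have h0 : (0:ℝ) < β ^ (n+1) := pow_pos (bpos hβ1) (n+1)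
  have h1 : (ε n : ℝ) ≤ 1 := by exact_mod_cast hε n
  show (ε n : ℝ) / β ^ (n+1) ≤ ((1:ℕ) : ℝ) / β ^ (n+1)
  push_cast
  gcongr

/-- shift formula -/
lemma pib_shift {ε : ℕ → ℕ} (hε : ∀ n, ε n ≤ 1) (n : ℕ) :
    pib β ε = (∑ k ∈ Finset.range n, (ε k : ℝ) / β ^ (k + 1))
      + (β ^ n)⁻¹ * pib β (fun k => ε (k + n)) := by
  have h0 : (0:ℝ) < β := bpos hβ1
  have hsum := summable_pib hβ1 hε
  have key := Summable.sum_add_tsum_nat_add (f := fun k => (ε k : ℝ) / β ^ (k + 1)) n hsum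
  have h2 : (∑' k : ℕ, (ε (k + n) : ℝ) / β ^ (k + n + 1))
      = (β ^ n)⁻¹ * pib β (fun k => ε (k + n)) := by
    have h3 : ∀ k : ℕ, (ε (k + n) : ℝ) / β ^ (k + n + 1)
        = (β ^ n)⁻¹ * ((ε (k + n) : ℝ) / β ^ (k + 1)) := by
      intro k
      rw [show k + n + 1 = (k + 1) + n by ring, pow_add]
      rw [div_eq_mul_inv, div_eq_mul_inv, mul_inv]
      ring
    simp_rw [h3]
    rw [tsum_mul_left]
    rfl
  unfold pib
  rw [← key, h2]
  rfl

lemma pib_step (ε : ℕ → ℕ) (hε : ∀ n, ε n ≤ 1) :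
    β * pib β ε = (ε 0 : ℝ) + pib β (fun k => ε (k + 1)) := by
  have h0 : (0:ℝ) < β := bpos hβ1
  have := pib_shift hβ1 hε 1
  rw [Finset.sum_range_one] at this
  rw [this]
  field_simp
  ring

lemma pib_compl {ε : ℕ → ℕ} (hε : ∀ n, ε n ≤ 1) :
    pib β (fun k => 1 - ε k) = 1 / (β - 1) - pib β ε := by
  have h1 : ∀ k, ((1 - ε k : ℕ) : ℝ) / β ^ (k+1)
      = (1:ℝ) / β ^ (k+1) - (ε k : ℝ) / β ^ (k+1) := by
    intro k
    rw [Nat.cast_sub (hε k)]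
    ring
  unfold pib
  simp_rw [h1]
  rw [Summable.tsum_sub (by simpa using summable_pib hβ1 (fun _ => le_refl 1)) (summable_pib hβ1 hε)]
  have := pib_ones hβ1
  unfold pib at this
  simp at this ⊢
  rw [this]

end basic

/-- greedy remainders -/
noncomputable def gr (β y : ℝ) : ℕ → ℝ
  | 0 => y
  | n+1 => if 1 ≤ β * gr β y n then β * gr β y n - 1 else β * gr β y n

/-- greedy digits -/
noncomputable def gd (β y : ℝ) (n : ℕ) : ℕ := if 1 ≤ β * gr β y n then 1 else 0

section greedy
variable {y : ℝ} (hβ2 : β < 2)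
include hβ1 hβ2

lemma one_lt_ones : (1:ℝ) < 1 / (β - 1) := by
  rw [lt_div_iff₀ (by linarith)]
  linarith

omit hβ2 in
lemma ones_mul : β * (1 / (β - 1)) = 1 / (β - 1) + 1 := by
  have h : β - 1 ≠ 0 := by linarith
  field_simp
  ring

omit hβ1 hβ2 in
lemma gr_succ (n : ℕ) : gr β y (n+1)
    = if 1 ≤ β * gr β y n then β * gr β y n - 1 else β * gr β y n := rfl

lemma gr_mem (hy0 : 0 ≤ y) (hy1 : y ≤ 1 / (β - 1)) :
    ∀ n, 0 ≤ gr β y n ∧ gr β y n ≤ 1 / (β - 1) := by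
  intro n
  induction n with
  | zero => exact ⟨hy0, hy1⟩
  | succ n ih =>
    obtain ⟨h0, h1⟩ := ih
    rw [gr_succ]
    have h2 := ones_mul hβ1
    by_cases h : 1 ≤ β * gr β y n
    · rw [if_pos h]
      have : β * gr β y n ≤ β * (1 / (β - 1)) :=
        mul_le_mul_of_nonneg_left h1 (by linarith)
      constructor <;> linarith
    · rw [if_neg h]
      refine ⟨by positivity, ?_⟩
      have := one_lt_ones hβ1 hβ2
      push_neg at h
      linarith

lemma gr_lt (hy0 : 0 ≤ y) (hy1 : y < 1 / (β - 1)) :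
    ∀ n, gr β y n < 1 / (β - 1) := by
  intro n
  induction n with
  | zero => exact hy1
  | succ n ih =>
    have h0 := (gr_mem hβ1 hβ2 hy0 hy1.le n).1
    rw [gr_succ]
    have h2 := ones_mul hβ1
    by_cases h : 1 ≤ β * gr β y n
    · rw [if_pos h]
      have : β * gr β y n < β * (1 / (β - 1)) :=
        mul_lt_mul_of_pos_left ih (by linarith)
      linarith
    · rw [if_neg h]
      push_neg at h
      have := one_lt_ones hβ1 hβ2
      linarith

omit hβ1 hβ2 in
lemma gd_le_one (n : ℕ) : gd β y n ≤ 1 := by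
  unfold gd
  split <;> simp

omit hβ1 hβ2 in
lemma gr_rec (n : ℕ) : gr β y (n+1) = β * gr β y n - (gd β y n : ℝ) := by
  show (if 1 ≤ β * gr β y n then β * gr β y n - 1 else β * gr β y n) = _
  unfold gd
  split <;> simp

lemma gr_partial (hy0 : 0 ≤ y) (hy1 : y ≤ 1 / (β - 1)) (n : ℕ) :
    y = (∑ k ∈ Finset.range n, (gd β y k : ℝ) / β ^ (k + 1)) + gr β y n / β ^ n := by
  have h0 : (0:ℝ) < β := bpos hβ1
  induction n with
  | zero => simp [gr]
  | succ n ih =>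
    rw [Finset.sum_range_succ]
    have hrec := gr_rec (β := β) (y := y) n
    have hβn : (β:ℝ) ^ n ≠ 0 := by positivity
    have hβn1 : (β:ℝ) ^ (n+1) ≠ 0 := by positivity
    have : gr β y (n+1) / β ^ (n+1) = gr β y n / β ^ n - (gd β y n : ℝ) / β ^ (n+1) := by
      rw [hrec, pow_succ]
      field_simp
    rw [this]
    linarith [ih]

lemma pib_gd (hy0 : 0 ≤ y) (hy1 : y ≤ 1 / (β - 1)) : pib β (gd β y) = y := by
  have h0 : (0:ℝ) < β := bpos hβ1
  have hnn : ∀ n, 0 ≤ (gd β y n : ℝ) / β ^ (n + 1) :=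
    term_nonneg hβ1 _
  have hs : HasSum (fun n => (gd β y n : ℝ) / β ^ (n+1)) y := by
    rw [hasSum_iff_tendsto_nat_of_nonneg hnn]
    have heq : ∀ n : ℕ, (∑ k ∈ Finset.range n, (gd β y k : ℝ) / β ^ (k + 1))
        = y - gr β y n / β ^ n := by
      intro n
      have := gr_partial hβ1 hβ2 hy0 hy1 n
      linarith
    simp_rw [heq]
    have : Filter.Tendsto (fun n : ℕ => gr β y n / β ^ n) Filter.atTop (nhds 0) := by
      apply squeeze_zero (fun n => by
        have := (gr_mem hβ1 hβ2 hy0 hy1 n).1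
        positivity)
        (g := fun n => (1/(β-1)) * (β⁻¹)^n)
      · intro n
        have h1 := (gr_mem hβ1 hβ2 hy0 hy1 n).2
        have h2 : (0:ℝ) < β ^ n := by positivity
        rw [div_eq_mul_inv, ← inv_pow]
        exact mul_le_mul_of_nonneg_right h1 (by positivity)
      · rw [show (0:ℝ) = (1/(β-1)) * 0 by ring]
        exact Filter.Tendsto.const_mul _
          (tendsto_pow_atTop_nhds_zero_of_lt_one (by positivity)
            (inv_lt_one_of_one_lt₀ hβ1))
    have := Filter.Tendsto.const_sub y this
    simpa using this
  exact hs.tsum_eq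

lemma exists_rep (hy0 : 0 ≤ y) (hy1 : y ≤ 1 / (β - 1)) :
    ∃ ε : ℕ → ℕ, (∀ n, ε n ≤ 1) ∧ pib β ε = y :=
  ⟨gd β y, fun n => gd_le_one n, pib_gd hβ1 hβ2 hy0 hy1⟩

lemma exists_rep_lazy (hy0 : 0 < y) (hy1 : y ≤ 1 / (β - 1)) :
    ∃ ε : ℕ → ℕ, (∀ n, ε n ≤ 1) ∧ pib β ε = y ∧ ∀ N, ∃ n ≥ N, ε n ≠ 0 := by
  set z := 1 / (β - 1) - y with hz
  have hz0 : 0 ≤ z := by rw [hz]; linarith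
  have hz1 : z < 1 / (β - 1) := by rw [hz]; linarith
  refine ⟨fun k => 1 - gd β z k, fun n => Nat.sub_le 1 _, ?_, ?_⟩
  · rw [pib_compl hβ1 (fun n => gd_le_one n), pib_gd hβ1 hβ2 hz0 hz1.le]
    rw [hz]
    ring
  · intro N
    by_contra hcon
    push_neg at hcon
    have hall : ∀ n ≥ N, gd β z n = 1 := by
      intro n hn
      have h1 := hcon n hn
      have := gd_le_one (β := β) (y := z) n
      omega
    have h1 : pib β (fun k => gd β z (k + N)) = 1 / (β - 1) := by
      have : (fun k => gd β z (k + N)) = fun _ => 1 := by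
        funext k
        exact hall (k + N) (by omega)
      rw [this, pib_ones hβ1]
    have h2 := pib_shift hβ1 (fun n => gd_le_one n) (ε := gd β z) N
    rw [pib_gd hβ1 hβ2 hz0 hz1.le, h1] at h2
    have h3 := gr_partial hβ1 hβ2 hz0 hz1.le N
    have h4 : (0:ℝ) < β ^ N := pow_pos (bpos hβ1) N
    have h5 : gr β z N = 1 / (β - 1) := by
      have : gr β z N / β ^ N = (β ^ N)⁻¹ * (1 / (β - 1)) := by linarith
      rw [div_eq_mul_inv, mul_comm] at this
      exact mul_left_cancel₀ (by positivity) this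
    exact absurd h5 (ne_of_lt (gr_lt hβ1 hβ2 hz0 hz1 N))

end greedy

section basic2
include hβ1

lemma pib_step_shift {ε : ℕ → ℕ} (hε : ∀ n, ε n ≤ 1) (n : ℕ) :
    β * pib β (fun k => ε (k + n)) = (ε n : ℝ) + pib β (fun k => ε (k + (n + 1))) := by
  have := pib_step hβ1 (fun k => ε (k + n)) (fun k => hε (k+n))
  simp only [Nat.zero_add] at this
  rw [this]
  congr 2
  funext k
  congr 1
  omega

lemma pib_prefix_shift {δ ε' : ℕ → ℕ} (hδ : ∀ k, δ k ≤ 1) (hε' : ∀ k, ε' k ≤ 1)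
    (heq : pib β δ = pib β ε') (n : ℕ) (hpre : ∀ k < n, δ k = ε' k) :
    pib β (fun k => δ (k + n)) = pib β (fun k => ε' (k + n)) := by
  have h1 := pib_shift hβ1 hδ n
  have h2 := pib_shift hβ1 hε' n
  have hs : (∑ k ∈ Finset.range n, (δ k : ℝ) / β ^ (k+1))
      = ∑ k ∈ Finset.range n, (ε' k : ℝ) / β ^ (k+1) :=
    Finset.sum_congr rfl (fun k hk => by rw [hpre k (Finset.mem_range.mp hk)])
  have hinv : ((β:ℝ) ^ n)⁻¹ ≠ 0 := by
    have := bpos hβ1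
    positivity
  apply mul_left_cancel₀ hinv
  linarith [h1, h2, hs]

lemma build_rep {ε : ℕ → ℕ} (hε : ∀ k, ε k ≤ 1) (n d : ℕ) (hd : d ≤ 1)
    {η : ℕ → ℕ} (hη : ∀ k, η k ≤ 1)
    (hval : (d:ℝ) + pib β η = β * pib β (fun k => ε (k + n))) :
    ∃ ε' : ℕ → ℕ, (∀ k, ε' k ≤ 1) ∧ pib β ε' = pib β ε ∧ ε' n = d ∧ ∀ k < n, ε' k = ε k := by
  have h0 : (0:ℝ) < β := bpos hβ1
  refine ⟨fun k => if k < n then ε k else if k = n then d else η (k - (n+1)), ?_, ?_, ?_, ?_⟩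
  · intro k
    simp only
    split
    · exact hε k
    · split
      · exact hd
      · exact hη _
  · have hdig : ∀ k, (fun k => if k < n then ε k else if k = n then d
        else η (k - (n+1))) k ≤ 1 := by
      intro k
      simp only
      split
      · exact hε k
      · split
        · exact hd
        · exact hη _
    have h1 := pib_shift hβ1 hdig (n+1)
    have hshift : (fun k => (fun j => if j < n then ε j else if j = n then d
        else η (j - (n+1))) (k + (n+1))) = η := by
      funext k
      simp only
      rw [if_neg (by omega), if_neg (by omega)]
      congr 1
      omega
    rw [hshift] at h1
    have h2 : (∑ k ∈ Finset.range (n+1), (((if k < n then ε k else if k = n then d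
          else η (k - (n+1)) : ℕ)) : ℝ) / β ^ (k + 1))
        = (∑ k ∈ Finset.range n, (ε k : ℝ) / β ^ (k + 1)) + (d:ℝ) / β ^ (n+1) := by
      rw [Finset.sum_range_succ]
      congr 1
      · apply Finset.sum_congr rfl
        intro k hk
        rw [Finset.mem_range] at hk
        rw [if_pos hk]
      · rw [if_neg (by omega), if_pos rfl]
        try norm_num
    have h3 := pib_shift hβ1 hε n
    have hpow : (0:ℝ) < β ^ (n+1) := by positivity
    have hpown : (0:ℝ) < β ^ n := by positivity
    have hkey : (d:ℝ) / β ^ (n+1) + (β ^ (n+1))⁻¹ * pib β η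
        = (β ^ n)⁻¹ * pib β (fun k => ε (k + n)) := by
      rw [pow_succ]
      rw [div_eq_mul_inv, mul_inv]
      have : (d:ℝ) + pib β η = β * pib β (fun k => ε (k + n)) := hval
      field_simp
      nlinarith [this]
    rw [h1, h2, h3]
    linarith
  · simp
  · intro k hk
    simp only
    rw [if_pos hk]

end basic2

/-! ### Lexicographic facts -/

lemma lex_trichotomy (x y : ℕ → ℕ) : LexLt x y ∨ x = y ∨ LexLt y x := by
  by_cases h : x = y
  · exact Or.inr (Or.inl h)
  · have hne : ∃ n, x n ≠ y n := by
      by_contra hc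
      push_neg at hc
      exact h (funext hc)
    set n := Nat.find hne with hn
    have h1 : x n ≠ y n := Nat.find_spec hne
    have h2 : ∀ k < n, x k = y k := fun k hk => by
      have := Nat.find_min hne hk
      omega
    rcases lt_or_gt_of_ne h1 with h3 | h3
    · exact Or.inl ⟨n, h2, h3⟩
    · exact Or.inr (Or.inr ⟨n, fun k hk => (h2 k hk).symm, h3⟩)

lemma not_lexlt_and_le {x y : ℕ → ℕ} (h1 : LexLt x y) (h2 : LexLe y x) : False := by
  obtain ⟨n, hpre, hlt⟩ := h1
  rcases h2 with ⟨m, hpre', hlt'⟩ | rfl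
  · rcases lt_trichotomy n m with h | rfl | h
    · have := hpre' n h
      omega
    · omega
    · have := hpre m h
      omega
  · omega

lemma lex_compl {x y : ℕ → ℕ} (hx : ∀ k, x k ≤ 1) (hy : ∀ k, y k ≤ 1)
    (h : LexLt (fun k => 1 - x k) y) : LexLt (fun k => 1 - y k) x := by
  obtain ⟨n, hpre, hlt⟩ := h
  refine ⟨n, fun k hk => ?_, ?_⟩
  · have h1 := hpre k hk
    have h2 := hx k
    have h3 := hy k
    simp only at h1 ⊢
    omega
  · have h2 := hx n
    have h3 := hy n
    simp only at hlt ⊢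
    omega

/-! ### Properties of the quasi-greedy expansion -/

section qg
variable {a : ℕ → ℕ} (hβ2 : β < 2) (ha : IsQuasiGreedyOne β a)
include hβ1 hβ2 ha

omit hβ1 hβ2 in
lemma pib_a_one : pib β a = 1 := ha.sum_one

omit hβ2 ha in
lemma pib_pos {ε : ℕ → ℕ} (hε : ∀ n, ε n ≤ 1) (h : ∃ m, ε m ≠ 0) : 0 < pib β ε := by
  obtain ⟨m, hm⟩ := h
  have h0 : (0:ℝ) < β := bpos hβ1
  have hterm : (0:ℝ) < (ε m : ℝ) / β ^ (m + 1) := by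
    have : 1 ≤ ε m := by omega
    have : (1:ℝ) ≤ (ε m : ℝ) := by exact_mod_cast this
    positivity
  calc (0:ℝ) < (ε m : ℝ) / β ^ (m+1) := hterm
    _ ≤ pib β ε := Summable.le_tsum (summable_pib hβ1 hε) m (fun j _ => term_nonneg hβ1 ε j)

omit hβ2 in
lemma t_pos (n : ℕ) : 0 < pib β (fun k => a (k + n)) := by
  apply pib_pos hβ1 (fun k => ha.digits (k+n))
  obtain ⟨j, hj, hne⟩ := ha.not_fin n
  refine ⟨j - n, ?_⟩
  have hh : j - n + n = j := by omega
  rw [hh]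
  exact hne

omit hβ2 in
lemma t_step (n : ℕ) : β * pib β (fun k => a (k + n))
    = (a n : ℝ) + pib β (fun k => a (k + (n + 1))) := by
  have := pib_step hβ1 (fun k => a (k + n)) (fun k => ha.digits (k+n))
  simp only [Nat.zero_add] at this
  rw [this]
  congr 2
  funext k
  congr 1
  omega

lemma t_le_one : ∀ n, pib β (fun k => a (k + n)) ≤ 1 := by
  intro n
  induction n with
  | zero => exact le_of_eq (pib_a_one ha)
  | succ n ih =>
    by_contra hcon
    push_neg at hcon
    have hstep := t_step hβ1 ha n
    have han : a n = 0 := by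
      have h1 : (a n : ℝ) < 1 := by nlinarith
      have h2 : a n < 1 := by exact_mod_cast h1
      omega
    have htn1 : pib β (fun k => a (k + (n + 1))) = β * pib β (fun k => a (k + n)) := by
      rw [hstep, han]
      simp
    set y : ℝ := pib β (fun k => a (k + (n + 1))) - 1 with hy
    have hy0 : 0 < y := by rw [hy]; linarith
    have hy1 : y ≤ 1 / (β - 1) := by
      have h1 := one_lt_ones hβ1 hβ2
      have : pib β (fun k => a (k + (n+1))) ≤ β := by
        rw [htn1]
        nlinarith [ih, bpos hβ1]
      rw [hy]
      linarith
    obtain ⟨δ, hδ1, hδ2, hδ3⟩ := exists_rep_lazy hβ1 hβ2 hy0 hy1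
    set b : ℕ → ℕ := fun k => if k < n then a k else if k = n then 1 else δ (k - (n+1))
      with hb
    have hbdig : ∀ k, b k ≤ 1 := by
      intro k
      simp only [hb]
      split
      · exact ha.digits k
      · split
        · exact le_refl 1
        · exact hδ1 _
    have hbshift : (fun k => b (k + (n+1))) = δ := by
      funext k
      rw [hb]
      simp only
      rw [if_neg (by omega), if_neg (by omega)]
      congr 1
      omega
    have hbfin : ∀ N, ∃ m ≥ N, b m ≠ 0 := by
      intro N
      obtain ⟨j, hj, hne⟩ := hδ3 N
      refine ⟨j + (n+1), by omega, ?_⟩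
      rw [hb]
      simp only
      rw [if_neg (by omega), if_neg (by omega)]
      have : j + (n+1) - (n+1) = j := by omega
      rw [this]
      exact hne
    have h0 : (0:ℝ) < β := bpos hβ1
    have hpow : (0:ℝ) < β ^ (n+1) := by positivity
    have hbsum : pib β b = 1 := by
      have h1 := pib_shift hβ1 hbdig (n+1)
      rw [hbshift, hδ2] at h1
      have h2 : (∑ k ∈ Finset.range (n+1), (b k : ℝ) / β ^ (k + 1))
          = (∑ k ∈ Finset.range n, (a k : ℝ) / β ^ (k + 1)) + 1 / β ^ (n+1) := by
        rw [Finset.sum_range_succ]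
        congr 1
        · apply Finset.sum_congr rfl
          intro k hk
          rw [Finset.mem_range] at hk
          rw [hb]
          simp only
          rw [if_pos hk]
        · simp [hb]
      have h3 := pib_shift hβ1 ha.digits n
      rw [pib_a_one ha] at h3
      have h4 : (∑ k ∈ Finset.range n, (a k : ℝ) / β ^ (k + 1))
          = 1 - (β ^ n)⁻¹ * pib β (fun k => a (k + n)) := by linarith
      rw [h1, h2, h4, hy]
      have hpn : (0:ℝ) < β ^ n := by positivity
      rw [htn1]
      field_simp
      ring
    have hmax := ha.maximal b hbdig hbsum hbfin
    have hlt : LexLt a b := by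
      refine ⟨n, fun k hk => ?_, ?_⟩
      · rw [hb]; simp only; rw [if_pos hk]
      · simp [hb, han]
    exact not_lexlt_and_le hlt hmax

omit hβ1 hβ2 ha in
lemma sh_sh (δ : ℕ → ℕ) (m n : ℕ) :
    (fun k => δ (k + n + m)) = (fun k => δ (k + (n + m))) := by
  funext k
  congr 1
  omega

/-- If `a ≼ η` lexicographically then the value of `η` is at least 1. -/
lemma pib_ge_one_of_lexle {η : ℕ → ℕ} (hη : ∀ k, η k ≤ 1) (h : LexLe a η) :
    1 ≤ pib β η := by
  rcases h with hlt | rfl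
  · obtain ⟨k, hpre, hlt⟩ := hlt
    have h0 : (0:ℝ) < β := bpos hβ1
    have hβk : (0:ℝ) < β ^ (k+1) := by positivity
    have h1 := pib_shift hβ1 hη (k+1)
    have h2 := pib_shift hβ1 ha.digits (k+1)
    rw [pib_a_one ha] at h2
    have hsums : (∑ j ∈ Finset.range (k+1), (η j:ℝ)/β^(j+1))
        = (∑ j ∈ Finset.range (k+1), (a j:ℝ)/β^(j+1))
          + ((η k:ℝ) - (a k:ℝ)) * (β^(k+1))⁻¹ := by
      rw [Finset.sum_range_succ, Finset.sum_range_succ]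
      have hc : (∑ j ∈ Finset.range k, (η j:ℝ)/β^(j+1))
          = ∑ j ∈ Finset.range k, (a j:ℝ)/β^(j+1) :=
        Finset.sum_congr rfl (fun j hj => by rw [← hpre j (Finset.mem_range.mp hj)])
      rw [hc]
      field_simp
      ring
    have hd : (1:ℝ) ≤ (η k:ℝ) - (a k:ℝ) := by
      have h3 : a k + 1 ≤ η k := hlt
      have h4 : ((a k:ℝ)) + 1 ≤ (η k:ℝ) := by exact_mod_cast h3
      linarith
    have hT := t_le_one hβ1 hβ2 ha (k+1)
    have hP := pib_nonneg hβ1 (fun j => η (j + (k+1)))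
    have hinv : (0:ℝ) < (β^(k+1))⁻¹ := by positivity
    have e1 : ((η k:ℝ) - (a k:ℝ)) * (β^(k+1))⁻¹ ≥ 1 * (β^(k+1))⁻¹ :=
      mul_le_mul_of_nonneg_right hd hinv.le
    have e2 : (β^(k+1))⁻¹ * pib β (fun j => a (j + (k+1))) ≤ (β^(k+1))⁻¹ * 1 :=
      mul_le_mul_of_nonneg_left hT hinv.le
    have e3 : 0 ≤ (β^(k+1))⁻¹ * pib β (fun j => η (j + (k+1))) :=
      mul_nonneg hinv.le hP
    rw [h1, hsums]
    linarith
  · exact le_of_eq (pib_a_one ha).symm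

lemma lexlt_of_pib_lt_one {η : ℕ → ℕ} (hη : ∀ k, η k ≤ 1) (h : pib β η < 1) :
    LexLt η a := by
  rcases lex_trichotomy η a with h1 | h1 | h1
  · exact h1
  · rw [h1, pib_a_one ha] at h
    linarith
  · have := pib_ge_one_of_lexle hβ1 hβ2 ha hη (Or.inl h1)
    linarith

/-- If every shift of `δ` is lexicographically strictly below `a`, its value is below 1. -/
lemma pib_lt_one_of_shifts {δ : ℕ → ℕ} (hδ : ∀ k, δ k ≤ 1)
    (h : ∀ m, LexLt (fun k => δ (k + m)) a) : pib β δ < 1 := by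
  have h0 : (0:ℝ) < β := bpos hβ1
  have step : ∀ m, 1 ≤ pib β (fun k => δ (k + m)) →
      ∃ m', β * (pib β (fun k => δ (k + m)) - 1) ≤ pib β (fun k => δ (k + m')) - 1 ∧
        0 < pib β (fun k => δ (k + m')) - 1 := by
    intro m hm
    obtain ⟨k, hpre, hlt⟩ := h m
    refine ⟨(k+1) + m, ?_⟩
    have hβk : (0:ℝ) < β ^ (k+1) := by positivity
    have hinv : (0:ℝ) < (β^(k+1))⁻¹ := by positivity
    have h1 := pib_shift hβ1 (fun j => hδ (j + m)) (k+1)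
    simp only [sh_sh δ m (k+1)] at h1
    have h2 := pib_shift hβ1 ha.digits (k+1)
    rw [pib_a_one ha] at h2
    simp only at hpre hlt
    have hsums : (∑ j ∈ Finset.range (k+1), (δ (j + m) : ℝ)/β^(j+1))
        = (∑ j ∈ Finset.range (k+1), (a j:ℝ)/β^(j+1))
          + ((δ (k + m):ℝ) - (a k:ℝ)) * (β^(k+1))⁻¹ := by
      rw [Finset.sum_range_succ, Finset.sum_range_succ]
      have hc : (∑ j ∈ Finset.range k, (δ (j + m):ℝ)/β^(j+1))
          = ∑ j ∈ Finset.range k, (a j:ℝ)/β^(j+1) :=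
        Finset.sum_congr rfl (fun j hj => by rw [hpre j (Finset.mem_range.mp hj)])
      rw [hc]
      field_simp
      ring
    have hd : (δ (k + m):ℝ) - (a k:ℝ) ≤ -1 := by
      have h3 : δ (k + m) + 1 ≤ a k := hlt
      have h4 : ((δ (k+m):ℝ)) + 1 ≤ (a k:ℝ) := by exact_mod_cast h3
      linarith
    have hT0 : 0 < pib β (fun j => a (j + (k+1))) := t_pos hβ1 ha (k+1)
    -- abbreviations as opaque variables
    obtain ⟨P, hPd⟩ : ∃ z, pib β (fun j => δ (j + (k + 1 + m))) = z := ⟨_, rfl⟩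
    obtain ⟨T, hTd⟩ : ∃ z, pib β (fun j => a (j + (k+1))) = z := ⟨_, rfl⟩
    obtain ⟨G, hGd⟩ : ∃ z, pib β (fun j => δ (j + m)) = z := ⟨_, rfl⟩
    rw [hPd, hGd] at h1
    rw [hTd] at h2 hT0
    rw [hGd] at hm ⊢
    rw [show (fun k_1 => δ (k_1 + (k + 1 + m))) = (fun j => δ (j + (k + 1 + m))) from rfl,
      hPd]
    have e2 : (G - 1) + (β^(k+1))⁻¹ < (β^(k+1))⁻¹ * P := by
      have hd2 : ((δ (k + m):ℝ) - (a k:ℝ)) * (β^(k+1))⁻¹ ≤ (-1) * (β^(k+1))⁻¹ :=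
        mul_le_mul_of_nonneg_right hd hinv.le
      have hTi : 0 < (β^(k+1))⁻¹ * T := mul_pos hinv hT0
      linarith [h1, h2, hsums]
    have e3 : β^(k+1) * ((G - 1) + (β^(k+1))⁻¹) < P := by
      have h5 := mul_lt_mul_of_pos_left e2 hβk
      rw [← mul_assoc, mul_inv_cancel₀ (ne_of_gt hβk), one_mul] at h5
      linarith
    have e4 : β^(k+1) * ((G - 1) + (β^(k+1))⁻¹) = β^(k+1) * (G - 1) + 1 := by
      rw [mul_add, mul_inv_cancel₀ (ne_of_gt hβk)]
    have hg0 : 0 ≤ G - 1 := by linarith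
    have e5 : β * (G - 1) ≤ β^(k+1) * (G - 1) :=
      mul_le_mul_of_nonneg_right (le_self_pow₀ (le_of_lt hβ1) (by omega)) hg0
    have e6 : 0 ≤ β^(k+1) * (G - 1) := mul_nonneg hβk.le hg0
    constructor
    · linarith
    · linarith
  by_contra hcon
  push_neg at hcon
  have hδ0 : 1 ≤ pib β (fun k => δ (k + 0)) := hcon
  obtain ⟨m₁, hm₁, hm₁'⟩ := step 0 hδ0
  obtain ⟨g₁, hg₁⟩ : ∃ z, pib β (fun k => δ (k + m₁)) - 1 = z := ⟨_, rfl⟩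
  rw [hg₁] at hm₁ hm₁'
  have claim : ∀ i : ℕ, ∃ m, β ^ i * g₁ ≤ pib β (fun k => δ (k + m)) - 1 := by
    intro i
    induction i with
    | zero => exact ⟨m₁, by rw [pow_zero, one_mul]; exact hg₁.ge⟩
    | succ i ih =>
      obtain ⟨m, hm⟩ := ih
      have hpos : (0:ℝ) < β ^ i * g₁ := mul_pos (pow_pos h0 i) hm₁'
      have h1m : 1 ≤ pib β (fun k => δ (k + m)) := by linarith
      obtain ⟨m', hm', _⟩ := step m h1m
      refine ⟨m', ?_⟩
      have : β * (β ^ i * g₁) ≤ β * (pib β (fun k => δ (k + m)) - 1) :=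
        mul_le_mul_of_nonneg_left hm (by linarith)
      calc β ^ (i+1) * g₁ = β * (β ^ i * g₁) := by ring
        _ ≤ β * (pib β (fun k => δ (k + m)) - 1) := this
        _ ≤ pib β (fun k => δ (k + m')) - 1 := hm'
  obtain ⟨i, hi⟩ := pow_unbounded_of_one_lt (1 / (β - 1) / g₁) hβ1
  obtain ⟨m, hm⟩ := claim i
  have hb1 : 1 / (β - 1) < β ^ i * g₁ := by
    rw [div_lt_iff₀ hm₁'] at hi
    linarith [mul_comm (β ^ i) g₁]
  have hb2 : pib β (fun k => δ (k + m)) ≤ 1 / (β - 1) :=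
    pib_le_ones hβ1 (fun k => hδ (k + m))
  linarith

end qg
end URep

/-- for `β ∈ (1,2)` with quasi-greedy expansion `a` of `1`, a binary sequence
`ε` is the unique `β`-representation of its value `x ∈ ((2-β)/(β-1), 1)` iff every shift
`σⁿ ε` lies lexicographically strictly between the complemented sequence `ā` and `a`. -/
theorem unique_representation_iff_between_shifts
    (β : ℝ) (hβ : β ∈ Set.Ioo (1 : ℝ) 2) (a : ℕ → ℕ) (ha : IsQuasiGreedyOne β a)
    (ε : ℕ → ℕ) (hε : ∀ n, ε n ≤ 1)
    (x : ℝ) (hxval : x = ∑' n : ℕ, (ε n : ℝ) / β ^ (n + 1))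
    (hx : x ∈ Set.Ioo ((2 - β) / (β - 1)) 1) :
    (∀ ε' : ℕ → ℕ, (∀ n, ε' n ≤ 1) → x = ∑' n : ℕ, (ε' n : ℝ) / β ^ (n + 1) → ε' = ε) ↔
    (∀ n : ℕ, LexLt (fun k => 1 - a k) (fun k => ε (k + n)) ∧
      LexLt (fun k => ε (k + n)) a) := by
  obtain ⟨hβ1, hβ2⟩ := hβ
  obtain ⟨hx1, hx2⟩ := hx
  have hβ0 : (0:ℝ) < β := URep.bpos hβ1
  have hb1 : β - 1 ≠ 0 := by linarith
  have hcval : (2 - β)/(β - 1) = 1/(β-1) - 1 := by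
    field_simp
    ring
  have hxp : x = URep.pib β ε := hxval
  constructor
  · intro hu
    have key : ∀ n, (2-β)/(β-1) < URep.pib β (fun k => ε (k + n)) ∧
        URep.pib β (fun k => ε (k + n)) < 1 := by
      intro n
      induction n with
      | zero =>
        have h00 : URep.pib β (fun k => ε (k + 0)) = URep.pib β ε := rfl
        rw [h00, ← hxp]
        exact ⟨hx1, hx2⟩
      | succ n ih =>
        obtain ⟨ihl, ihr⟩ := ih
        have hstep := URep.pib_step_shift hβ1 hε n
        have hc0 : 0 < (2-β)/(β-1) := div_pos (by linarith) (by linarith)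
        have hones := URep.one_lt_ones hβ1 hβ2
        have hPnn := URep.pib_nonneg hβ1 (fun k => ε (k + n))
        by_cases hc : ε n = 0
        · have h0n : ((ε n : ℕ):ℝ) = 0 := by rw [hc]; norm_num
          have hP' : URep.pib β (fun k => ε (k + (n+1)))
              = β * URep.pib β (fun k => ε (k + n)) := by
            rw [hstep, h0n]; ring
          constructor
          · rw [hP']
            have e1 : β * ((2-β)/(β-1)) < β * URep.pib β (fun k => ε (k + n)) :=
              mul_lt_mul_of_pos_left ihl hβ0
            nlinarith
          · by_contra hcon1
            push_neg at hcon1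
            have hy0 : 0 ≤ β * URep.pib β (fun k => ε (k + n)) - 1 := by
              rw [← hP']; linarith
            have hy1 : β * URep.pib β (fun k => ε (k + n)) - 1 ≤ 1/(β-1) := by
              have := URep.pib_le_ones hβ1 (fun k => hε (k + (n+1)))
              rw [hP'] at this
              linarith
            obtain ⟨η, hη1, hη2⟩ := URep.exists_rep hβ1 hβ2 hy0 hy1
            obtain ⟨ε', hd1, hd2, hd3, _⟩ := URep.build_rep hβ1 hε n 1 (le_refl 1) hη1
              (by rw [hη2]; push_cast; ring)
            have := hu ε' hd1 (by rw [hxval]; exact hd2.symm)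
            rw [this] at hd3
            omega
        · have hc1 : ε n = 1 := by have := hε n; omega
          have h1n : ((ε n : ℕ):ℝ) = 1 := by rw [hc1]; norm_num
          have hP' : URep.pib β (fun k => ε (k + (n+1)))
              = β * URep.pib β (fun k => ε (k + n)) - 1 := by
            rw [hstep, h1n]; ring
          constructor
          · by_contra hcon1
            push_neg at hcon1
            have hy0 : (0:ℝ) ≤ β * URep.pib β (fun k => ε (k + n)) := by positivity
            have hy1 : β * URep.pib β (fun k => ε (k + n)) ≤ 1/(β-1) := by
              rw [hcval] at hcon1
              linarith [hP']
            obtain ⟨η, hη1, hη2⟩ := URep.exists_rep hβ1 hβ2 hy0 hy1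
            obtain ⟨ε', hd1, hd2, hd3, _⟩ := URep.build_rep hβ1 hε n 0 (by omega) hη1
              (by rw [hη2]; push_cast; ring)
            have := hu ε' hd1 (by rw [hxval]; exact hd2.symm)
            rw [this] at hd3
            omega
          · have e1 : β * URep.pib β (fun k => ε (k + n)) < β * 1 :=
              mul_lt_mul_of_pos_left ihr hβ0
            rw [hP']
            linarith
    intro n
    obtain ⟨hl, hr⟩ := key n
    constructor
    · have hcompl : URep.pib β (fun k => 1 - ε (k + n)) < 1 := by
        rw [URep.pib_compl hβ1 (fun k => hε (k + n))]
        rw [hcval] at hl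
        linarith
      have hlex := URep.lexlt_of_pib_lt_one hβ1 hβ2 ha
        (fun k => Nat.sub_le 1 _) hcompl
      exact URep.lex_compl (fun k => hε (k + n)) ha.digits hlex
    · exact URep.lexlt_of_pib_lt_one hβ1 hβ2 ha (fun k => hε (k + n)) hr
  · intro H
    have h1 : ∀ n, URep.pib β (fun k => ε (k + n)) < 1 := by
      intro n
      apply URep.pib_lt_one_of_shifts hβ1 hβ2 ha (fun k => hε (k + n))
      intro m
      simp only [URep.sh_sh ε n m]
      exact (H (m + n)).2
    have h2 : ∀ n, URep.pib β (fun k => 1 - ε (k + n)) < 1 := by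
      intro n
      apply URep.pib_lt_one_of_shifts hβ1 hβ2 ha (fun k => Nat.sub_le 1 _)
      intro m
      have hlex := URep.lex_compl ha.digits (fun k => hε (k + (m + n))) (H (m + n)).1
      simp only [URep.sh_sh (fun k => 1 - ε k) n m]
      exact hlex
    have h3 : ∀ n, (2-β)/(β-1) < URep.pib β (fun k => ε (k + n)) := by
      intro n
      have := h2 n
      rw [URep.pib_compl hβ1 (fun k => hε (k + n))] at this
      rw [hcval]
      linarith
    intro ε' hε'd hε'v
    by_contra hne
    have hdiff : ∃ n, ε' n ≠ ε n := by
      by_contra hcA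
      push_neg at hcA
      exact hne (funext hcA)
    obtain ⟨n, hpre, hd⟩ : ∃ n, (∀ k < n, ε' k = ε k) ∧ ε' n ≠ ε n :=
      ⟨Nat.find hdiff, fun k hk => not_ne_iff.mp (Nat.find_min hdiff hk),
        Nat.find_spec hdiff⟩
    have hpv : URep.pib β ε' = URep.pib β ε := hε'v.symm.trans hxval
    have hsh := URep.pib_prefix_shift hβ1 hε'd hε hpv n hpre
    have hs1 := URep.pib_step_shift hβ1 hε'd n
    have hs2 := URep.pib_step_shift hβ1 hε n
    have hcase : (ε' n = 0 ∧ ε n = 1) ∨ (ε' n = 1 ∧ ε n = 0) := by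
      have := hε'd n
      have := hε n
      omega
    rcases hcase with ⟨h0', h1'⟩ | ⟨h0', h1'⟩
    · have e0 : ((ε' n : ℕ):ℝ) = 0 := by rw [h0']; norm_num
      have e1 : ((ε n : ℕ):ℝ) = 1 := by rw [h1']; norm_num
      rw [e0] at hs1
      rw [e1] at hs2
      have heq : URep.pib β (fun k => ε' (k + (n+1)))
          = 1 + URep.pib β (fun k => ε (k + (n+1))) := by
        rw [hsh] at hs1
        linarith
      have hle := URep.pib_le_ones hβ1 (fun k => hε'd (k + (n+1)))
      have := h3 (n+1)
      rw [hcval] at this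
      linarith
    · have e0 : ((ε' n : ℕ):ℝ) = 1 := by rw [h0']; norm_num
      have e1 : ((ε n : ℕ):ℝ) = 0 := by rw [h1']; norm_num
      rw [e0] at hs1
      rw [e1] at hs2
      have heq : URep.pib β (fun k => ε (k + (n+1)))
          = 1 + URep.pib β (fun k => ε' (k + (n+1))) := by
        rw [hsh] at hs1
        linarith
      have hnn := URep.pib_nonneg hβ1 (fun k => ε' (k + (n+1)))
      have := h1 (n+1)
      linarith
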